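/- arXiv:2309.13951 — 2 statements merged into one kernel-verified Lean document; each statement's English description precedes it below -/
import Mathlib

section
/- Let K be a real closed field with a convex valuation ring O, valuation v : K^× → Γ, maximal ideal 𝔪, and residue field k. Let ac : K^> → k^> be a group homomorphism from the positive multiplicative group of K to the positive multiplicative group of k such that ac(a) = res(a) whenever v(a) = 0. Then there exists a group homomorphism s : Γ → K^> with v(s(γ)) = γ for all γ ∈ Γ and ac(a) = res(a · s(va)^{-1}) for all a ∈ K^>. -/
/-- Let `K` be a real closed field (every nonnegative element has a square
root and every odd-degree polynomial has a root) with a convex valuation ring `O`,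
valuation `v : Kˣ → Γ` (surjective), residue field `k` with residue map `res : O → k`,
and let `ac` be a group homomorphism from the positive multiplicative group of `K` to the
positive multiplicative group of `k` agreeing with `res` on elements of valuation zero.
Then there is a group homomorphism `s : Γ → K^>` with `v (s γ) = γ` for all `γ` and
`ac a = res (a * s (v a)⁻¹)` for all positive `a`. -/
theorem statement2
    {K : Type*} [Field K] [LinearOrder K] [IsStrictOrderedRing K]
    (hsq : ∀ x : K, 0 ≤ x → ∃ y : K, y ^ 2 = x)
    (hodd : ∀ p : Polynomial K, Odd p.natDegree → ∃ x : K, p.IsRoot x)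
    {Γ : Type*} [AddCommGroup Γ] [LinearOrder Γ] [IsOrderedAddMonoid Γ]
    (v : Kˣ → Γ) (hv : ∀ a b : Kˣ, v (a * b) = v a + v b)
    (hvsurj : Function.Surjective v)
    (O : Subring K)
    (hconv : ∀ x y : K, x ∈ O → 0 ≤ y → y ≤ x → y ∈ O)
    (hO : ∀ a : Kˣ, (a : K) ∈ O ↔ 0 ≤ v a)
    {k : Type*} [Field k] [LinearOrder k] [IsStrictOrderedRing k]
    (res : O →+* k)
    (hres_surj : Function.Surjective res)
    (hres_ker : ∀ (a : Kˣ) (h : (a : K) ∈ O), (res ⟨(a : K), h⟩ = 0 ↔ 0 < v a))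
    (hres_pos : ∀ x : O, 0 < (x : K) → 0 ≤ res x)
    (ac : Kˣ → k)
    (hac_mul : ∀ a b : Kˣ, 0 < (a : K) → 0 < (b : K) → ac (a * b) = ac a * ac b)
    (hac_pos : ∀ a : Kˣ, 0 < (a : K) → 0 < ac a)
    (hac_res : ∀ (a : Kˣ) (h : (a : K) ∈ O), 0 < (a : K) → v a = 0 →
      ac a = res ⟨(a : K), h⟩) :
    ∃ s : Γ → Kˣ,
      (∀ γ : Γ, (0 : K) < (s γ : K)) ∧
      (∀ γ δ : Γ, s (γ + δ) = s γ * s δ) ∧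
      (∀ γ : Γ, v (s γ) = γ) ∧
      (∀ a : Kˣ, 0 < (a : K) →
        ∀ h : ((a * (s (v a))⁻¹ : Kˣ) : K) ∈ O,
          ac a = res ⟨((a * (s (v a))⁻¹ : Kˣ) : K), h⟩) := by
  classical
  -- basic valuation facts
  have hv1 : v 1 = 0 := by
    have h := hv 1 1
    rw [one_mul] at h
    have h2 : v 1 + 0 = v 1 + v 1 := by rw [add_zero]; exact h
    exact (add_left_cancel h2).symm
  have hvinv : ∀ a : Kˣ, v a⁻¹ = - v a := by
    intro a
    have h := hv a a⁻¹
    rw [mul_inv_cancel, hv1] at h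
    exact eq_neg_of_add_eq_zero_right h.symm
  have hvpow : ∀ (a : Kˣ) (n : ℕ), v (a ^ n) = n • v a := by
    intro a n
    induction n with
    | zero => simpa using hv1
    | succ m ih => rw [pow_succ, hv, ih, succ_nsmul]
  have htf : ∀ (n : ℕ) (γ : Γ), n ≠ 0 → n • γ = 0 → γ = 0 := by
    intro n γ hn h
    rcases lt_trichotomy γ 0 with hlt | heq | hgt
    · have h2 := nsmul_pos (a := -γ) (neg_pos.mpr hlt) hn
      rw [smul_neg, h, neg_zero] at h2
      exact absurd h2 (lt_irrefl 0)
    · exact heq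
    · have : 0 < n • γ := nsmul_pos hgt hn
      exact absurd h this.ne'
  have hvneg1 : v (-1 : Kˣ) = 0 := by
    have h : ((-1 : Kˣ) * (-1 : Kˣ)) = 1 := by
      ext; simp
    have := hv (-1) (-1)
    rw [h, hv1] at this
    have h2 : (2 : ℕ) • v (-1 : Kˣ) = 0 := by
      rw [two_nsmul]; exact this.symm
    exact htf 2 _ (by norm_num) h2
  -- basic ac facts
  have hac1 : ac 1 = 1 := by
    have h1 : ((1 : Kˣ) : K) ∈ O := by simpa using O.one_mem
    have := hac_res 1 h1 (by norm_num) hv1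
    rw [this]
    have : (⟨((1:Kˣ):K), h1⟩ : O) = 1 := by ext; simp
    rw [this, map_one]
  have hacinv : ∀ a : Kˣ, 0 < (a : K) → ac a⁻¹ = (ac a)⁻¹ := by
    intro a ha
    have hainv : (0:K) < ((a⁻¹ : Kˣ) : K) := by
      rw [Units.val_inv_eq_inv_val]; positivity
    have h := hac_mul a a⁻¹ ha hainv
    rw [mul_inv_cancel, hac1] at h
    exact eq_inv_of_mul_eq_one_left (by rw [mul_comm]; exact h.symm)
  have hacpow : ∀ (a : Kˣ) (n : ℕ), 0 < (a : K) → ac (a ^ n) = ac a ^ n := by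
    intro a n ha
    induction n with
    | zero => simpa using hac1
    | succ m ih =>
      have hpos : (0:K) < ((a ^ m : Kˣ) : K) := by
        rw [Units.val_pow_eq_pow_val]; positivity
      rw [pow_succ, hac_mul _ _ hpos ha, ih, pow_succ]
  -- n-th roots of positive elements
  have hroot : ∀ n : ℕ, 0 < n → ∀ x : K, 0 < x → ∃ y : K, 0 < y ∧ y ^ n = x := by
    intro n
    induction n using Nat.strong_induction_on with
    | _ n ih =>
      intro hn x hx
      rcases Nat.even_or_odd n with he | ho
      · obtain ⟨m, hm⟩ := he
        have hm0 : 0 < m := by omega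
        obtain ⟨ws, hws⟩ := hsq x hx.le
        have hws0 : ws ≠ 0 := by
          rintro rfl
          rw [zero_pow (by norm_num)] at hws
          exact hx.ne hws
        obtain ⟨y, hy0, hym⟩ := ih m (by omega) hm0 |ws| (abs_pos.mpr hws0)
        refine ⟨y, hy0, ?_⟩
        rw [hm, ← two_mul, mul_comm, pow_mul, hym, sq_abs, hws]
      · obtain ⟨z, hz⟩ := hodd (Polynomial.X ^ n - Polynomial.C x)
          (by rwa [Polynomial.natDegree_X_pow_sub_C])
        have hzn : z ^ n = x := by
          have h2 := hz
          simp only [Polynomial.IsRoot, Polynomial.eval_sub, Polynomial.eval_pow,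
            Polynomial.eval_X, Polynomial.eval_C, sub_eq_zero] at h2
          exact h2
        have hz0 : 0 < z := by
          by_contra hc
          push_neg at hc
          have h3 := Odd.pow_nonpos ho hc
          rw [hzn] at h3
          linarith
        exact ⟨z, hz0, hzn⟩
  -- unit n-th roots
  have huroot : ∀ (a : Kˣ), 0 < (a : K) → ∀ n : ℕ, 0 < n →
      ∃ b : Kˣ, 0 < (b : K) ∧ b ^ n = a := by
    intro a ha n hn
    obtain ⟨y, hy0, hyn⟩ := hroot n hn (a : K) ha
    refine ⟨Units.mk0 y hy0.ne', hy0, ?_⟩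
    ext
    simpa using hyn
  -- the subgroups
  let A : Subgroup Kˣ :=
    { carrier := {a : Kˣ | 0 < (a : K) ∧ ac a = 1}
      one_mem' := ⟨by norm_num, hac1⟩
      mul_mem' := by
        rintro a b ⟨ha, ha1⟩ ⟨hb, hb1⟩
        exact ⟨by rw [Units.val_mul]; positivity, by rw [hac_mul a b ha hb, ha1, hb1, mul_one]⟩
      inv_mem' := by
        rintro a ⟨ha, ha1⟩
        refine ⟨by rw [Units.val_inv_eq_inv_val]; positivity, by rw [hacinv a ha, ha1, inv_one]⟩ }
  let D : Subgroup Kˣ :=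
    { carrier := {a : Kˣ | (0 < (a : K) ∧ ac a = 1) ∧ v a = 0}
      one_mem' := ⟨A.one_mem', hv1⟩
      mul_mem' := by
        rintro a b ⟨ha, hva⟩ ⟨hb, hvb⟩
        exact ⟨A.mul_mem' ha hb, by rw [hv, hva, hvb, add_zero]⟩
      inv_mem' := by
        rintro a ⟨ha, hva⟩
        exact ⟨A.inv_mem' ha, by rw [hvinv, hva, neg_zero]⟩ }
  have hDA : D ≤ A := fun a ha => ha.1
  -- divisibility of D
  -- positive powers equal to one
  have hpow1 : ∀ (t : k) (m : ℕ), 0 < t → m ≠ 0 → t ^ m = 1 → t = 1 := by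
    intro t m ht hm htm
    rcases lt_trichotomy t 1 with hlt | heq | hgt
    · have := pow_lt_one₀ ht.le hlt hm
      rw [htm] at this
      exact absurd this (lt_irrefl 1)
    · exact heq
    · have := one_lt_pow₀ hgt hm
      rw [htm] at this
      exact absurd this (lt_irrefl 1)
  have hDnat : ∀ (m : ℕ), m ≠ 0 → ∀ d : ↥D, ∃ e : ↥D, e ^ m = d := by
    intro m hm d
    have hdpos : 0 < ((d : Kˣ) : K) := d.2.1.1
    obtain ⟨b, hbpos, hbm⟩ := huroot (d : Kˣ) hdpos m (Nat.pos_of_ne_zero hm)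
    have hvb : v b = 0 := by
      have h1 : m • v b = 0 := by rw [← hvpow, hbm]; exact d.2.2
      exact htf m _ hm h1
    have hacb : ac b = 1 := by
      have h1 : ac b ^ m = 1 := by rw [← hacpow b m hbpos, hbm]; exact d.2.1.2
      exact hpow1 _ m (hac_pos b hbpos) hm h1
    refine ⟨⟨b, ⟨hbpos, hacb⟩, hvb⟩, ?_⟩
    ext
    exact congrArg Units.val hbm
  have hDdiv : ∀ (n : ℤ), n ≠ 0 → ∀ d : ↥D, ∃ e : ↥D, e ^ n = d := by
    intro n hn d
    obtain ⟨b, hb⟩ := hDnat n.natAbs (by omega) d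
    rcases lt_or_gt_of_ne hn with hneg | hpos
    · refine ⟨b⁻¹, ?_⟩
      rw [show n = -(n.natAbs : ℤ) by omega, zpow_neg, inv_zpow, inv_inv, zpow_natCast, hb]
    · refine ⟨b, ?_⟩
      rw [show n = (n.natAbs : ℤ) by omega, zpow_natCast, hb]
  haveI : DivisibleBy (Additive ↥D) ℤ :=
    divisibleByOfSMulRightSurj _ _ (fun {n} hn x => (hDdiv n hn x.toMul).imp fun e he =>
      congrArg Additive.ofMul he)
  -- Baer retraction
  obtain ⟨r, hr⟩ : ∃ r : (Additive ↥A) →+ (Additive ↥D),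
      r.comp (MonoidHom.toAdditive (Subgroup.inclusion hDA)) = AddMonoidHom.id _ := by
    have inj : Function.Injective ⇑(MonoidHom.toAdditive (Subgroup.inclusion hDA)) :=
      Subgroup.inclusion_injective hDA
    exact (Module.Baer.of_divisible _).extension_property_addMonoidHom _ inj (AddMonoidHom.id _)
  set ρ : ↥A → ↥D := fun x => (r (Additive.ofMul x)).toMul with hρdef
  have hρ_mul : ∀ x y : ↥A, ρ (x * y) = ρ x * ρ y := by
    intro x y
    simp only [hρdef]
    rw [show Additive.ofMul (x * y) = Additive.ofMul x + Additive.ofMul y from rfl, map_add]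
    rfl
  have hρ_D : ∀ (d : Kˣ) (hd : d ∈ D), ρ ⟨d, hDA hd⟩ = ⟨d, hd⟩ := by
    intro d hd
    have := DFunLike.congr_fun hr (Additive.ofMul (⟨d, hd⟩ : ↥D))
    exact this
  -- surjectivity of v on A
  have hAsurj : ∀ γ : Γ, ∃ a : ↥A, v (a : Kˣ) = γ := by
    intro γ
    obtain ⟨a0, ha0⟩ := hvsurj γ
    have ha0ne : (a0 : K) ≠ 0 := a0.ne_zero
    obtain ⟨a1, ha1pos, hva1⟩ : ∃ a1 : Kˣ, 0 < (a1 : K) ∧ v a1 = γ := by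
      rcases lt_or_gt_of_ne ha0ne with hlt | hgt
      · refine ⟨-a0, ?_, ?_⟩
        · rw [Units.val_neg]; linarith
        · have hneg : (-a0) = (-1) * a0 := by ext; simp
          rw [hneg, hv, hvneg1, zero_add, ha0]
      · exact ⟨a0, hgt, ha0⟩
    have hcpos : 0 < ac a1 := hac_pos a1 ha1pos
    obtain ⟨x, hx⟩ := hres_surj (ac a1)
    have hxne : (x : K) ≠ 0 := by
      rintro hx0
      have hx1 : x = 0 := by ext; exact hx0
      rw [hx1, map_zero] at hx
      exact hcpos.ne' hx.symm
    have hxpos : 0 < (x : K) := by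
      rcases lt_or_gt_of_ne hxne with hlt | hgt
      · exfalso
        have hnegpos : 0 < ((-x : O) : K) := by push_cast; linarith
        have h2 := hres_pos (-x) hnegpos
        rw [map_neg, hx] at h2
        linarith
      · exact hgt
    set b : Kˣ := Units.mk0 (x : K) hxne with hb
    have hbO : ((b : Kˣ) : K) ∈ O := x.2
    have hxb : (⟨(b : K), hbO⟩ : O) = x := by ext; rfl
    have hvb0 : v b = 0 := by
      have hge : 0 ≤ v b := (hO b).mp hbO
      rcases hge.lt_or_eq with hlt | heq
      · exfalso
        have h2 := (hres_ker b hbO).mpr hlt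
        rw [hxb, hx] at h2
        exact hcpos.ne' h2
      · exact heq.symm
    have hacb : ac b = ac a1 := by
      have h2 := hac_res b hbO hxpos hvb0
      rw [h2, hxb, hx]
    have hbipos : (0 : K) < ((b⁻¹ : Kˣ) : K) := by
      rw [Units.val_inv_eq_inv_val]
      have : (0:K) < (b : K) := hxpos
      positivity
    refine ⟨⟨a1 * b⁻¹, ?_, ?_⟩, ?_⟩
    · rw [Units.val_mul]
      positivity
    · rw [hac_mul a1 b⁻¹ ha1pos hbipos, hacinv b hxpos, hacb,
        mul_inv_cancel₀ hcpos.ne']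
    · rw [hv, hvinv, hvb0, neg_zero, add_zero, hva1]
  choose w hw using hAsurj
  -- the section
  refine ⟨fun γ => ((w γ : Kˣ)) * ((ρ (w γ) : Kˣ))⁻¹, ?_, ?_, ?_, ?_⟩
  · intro γ
    have h1 : 0 < ((w γ : Kˣ) : K) := (w γ).2.1
    have h2 : 0 < ((ρ (w γ) : Kˣ) : K) := (ρ (w γ)).2.1.1
    rw [Units.val_mul, Units.val_inv_eq_inv_val]
    positivity
  · intro γ δ
    set t : ↥A := w (γ + δ) * (w γ)⁻¹ * (w δ)⁻¹ with ht
    have hvt : v (t : Kˣ) = 0 := by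
      have hco : (t : Kˣ) = (w (γ + δ) : Kˣ) * ((w γ : Kˣ))⁻¹ * ((w δ : Kˣ))⁻¹ := rfl
      rw [hco, hv, hv, hvinv, hvinv, hw, hw, hw]
      abel
    have htD : (t : Kˣ) ∈ D := ⟨t.2, hvt⟩
    have hρt : ρ t = ⟨(t : Kˣ), htD⟩ := hρ_D (t : Kˣ) htD
    have hwsum : w (γ + δ) = t * w γ * w δ := by
      rw [ht, mul_right_comm (w (γ + δ) * (w γ)⁻¹) ((w δ))⁻¹ (w γ),
        inv_mul_cancel_right, inv_mul_cancel_right]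
    have hρsum : ρ (w (γ + δ)) = ⟨(t : Kˣ), htD⟩ * ρ (w γ) * ρ (w δ) := by
      rw [hwsum, hρ_mul, hρ_mul, hρt]
    have e1 : ((w (γ + δ) : Kˣ) : K)
        = ((t : Kˣ) : K) * ((w γ : Kˣ) : K) * ((w δ : Kˣ) : K) := by
      rw [hwsum]; rfl
    have e2 : ((ρ (w (γ + δ)) : Kˣ) : K)
        = ((t : Kˣ) : K) * ((ρ (w γ) : Kˣ) : K) * ((ρ (w δ) : Kˣ) : K) := by
      rw [hρsum]; rfl
    have hne : ∀ u : Kˣ, (u : K) ≠ 0 := fun u => u.ne_zero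
    ext
    simp only [Units.val_mul, Units.val_inv_eq_inv_val]
    rw [e1, e2]
    field_simp
  · intro γ
    rw [hv, hvinv, hw, (ρ (w γ)).2.2, neg_zero, add_zero]
  · intro a ha h
    have h1 : 0 < ((w (v a) : Kˣ) : K) := (w (v a)).2.1
    have h2 : 0 < ((ρ (w (v a)) : Kˣ) : K) := (ρ (w (v a))).2.1.1
    have h2i : (0:K) < (((ρ (w (v a)) : Kˣ))⁻¹ : Kˣ) := by
      rw [Units.val_inv_eq_inv_val]; positivity
    have hspos : (0:K) < ((w (v a) : Kˣ) * ((ρ (w (v a)) : Kˣ))⁻¹ : Kˣ) := by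
      rw [Units.val_mul]; positivity
    have hsipos : (0:K) < (((w (v a) : Kˣ) * ((ρ (w (v a)) : Kˣ))⁻¹)⁻¹ : Kˣ) := by
      rw [Units.val_inv_eq_inv_val]; positivity
    have hacs : ac ((w (v a) : Kˣ) * ((ρ (w (v a)) : Kˣ))⁻¹) = 1 := by
      rw [hac_mul _ _ h1 h2i, (w (v a)).2.2, hacinv _ h2, (ρ (w (v a))).2.1.2,
        inv_one, one_mul]
    have hacg : ac (a * ((w (v a) : Kˣ) * ((ρ (w (v a)) : Kˣ))⁻¹)⁻¹) = ac a := by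
      rw [hac_mul a _ ha hsipos, hacinv _ hspos, hacs, inv_one, mul_one]
    have hgpos : (0:K) < ((a * ((w (v a) : Kˣ) * ((ρ (w (v a)) : Kˣ))⁻¹)⁻¹ : Kˣ) : K) := by
      rw [Units.val_mul]; positivity
    have hvg : v (a * ((w (v a) : Kˣ) * ((ρ (w (v a)) : Kˣ))⁻¹)⁻¹) = 0 := by
      rw [hv, hvinv, hv, hvinv, hw, (ρ (w (v a))).2.2, neg_zero, add_zero,
        add_neg_cancel]
    rw [← hacg]
    exact hac_res _ h hgpos hvg
end

section
/- Let K be a field equipped with a valuation v : K^× → Γ and a derivation ∂ such that ∂O ⊆ O, where O = {a ∈ K : v(a) ≥ 0} ∪ {0}. Suppose K has many constants: for every γ ∈ Γ there exists c ∈ K^× with ∂c = 0 and v(c) = γ. Then K is monotone, i.e., v(∂a) ≥ v(a) for every a ∈ K^×. -/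
/-- A valued differential field whose derivation maps the valuation ring into
itself and which has many constants (every value is the valuation of a nonzero constant)
is monotone: `v (∂ a) ≥ v a` for every nonzero `a`. -/
theorem statement3
    {K : Type*} [Field K] {Γ : Type*} [AddCommGroup Γ] [LinearOrder Γ] [IsOrderedAddMonoid Γ]
    (v : K → WithTop Γ)
    (hv0 : ∀ x : K, v x = ⊤ ↔ x = 0)
    (hvmul : ∀ x y : K, v (x * y) = v x + v y)
    (hvadd : ∀ x y : K, min (v x) (v y) ≤ v (x + y))
    (der : K → K)
    (hder_add : ∀ x y : K, der (x + y) = der x + der y)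
    (hder_mul : ∀ x y : K, der (x * y) = der x * y + x * der y)
    (hderO : ∀ x : K, 0 ≤ v x → 0 ≤ v (der x))
    (hmany : ∀ γ : Γ, ∃ c : K, c ≠ 0 ∧ der c = 0 ∧ v c = (γ : WithTop Γ)) :
    ∀ a : K, a ≠ 0 → v a ≤ v (der a) := by
  intro a ha
  -- v a is not ⊤, so it's a coercion of some γ
  have hva : v a ≠ ⊤ := fun h => ha ((hv0 a).mp h)
  obtain ⟨γ, hγ⟩ : ∃ γ : Γ, v a = (γ : WithTop Γ) := by
    cases h : v a with
    | top => exact absurd h hva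
    | coe γ => exact ⟨γ, rfl⟩
  obtain ⟨c, hc0, hdc, hvc⟩ := hmany γ
  -- v 1 = 0
  have hv1 : v 1 = 0 := by
    have h := hvmul 1 1
    rw [one_mul] at h
    have h1 : v (1 : K) ≠ ⊤ := fun h' => one_ne_zero ((hv0 1).mp h')
    cases hx : v (1 : K) with
    | top => exact absurd hx h1
    | coe x =>
      rw [hx] at h
      have : (x : WithTop Γ) = (x : WithTop Γ) + x := h
      rw [← WithTop.coe_add] at this
      have hx2 : x = x + x := WithTop.coe_injective this
      have : x = 0 := by
        have h' : x + x = 0 + x := by rw [zero_add]; exact hx2.symm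
        exact add_right_cancel h'
      simp [hx, this]
  -- v c⁻¹ = -γ
  have hvcinv : v c⁻¹ = ((-γ : Γ) : WithTop Γ) := by
    have h := hvmul c c⁻¹
    rw [mul_inv_cancel₀ hc0, hv1, hvc] at h
    cases hx : v c⁻¹ with
    | top => exact absurd ((hv0 _).mp hx) (inv_ne_zero hc0)
    | coe x =>
      rw [hx, ← WithTop.coe_add, ← WithTop.coe_zero] at h
      have := WithTop.coe_injective h
      have hx0 : x = -γ := (neg_eq_of_add_eq_zero_right this.symm).symm
      rw [hx0]
  -- u = a * c⁻¹ has v u = 0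
  set u := a * c⁻¹ with hu
  have hvu : v u = 0 := by
    rw [hu, hvmul, hγ, hvcinv, ← WithTop.coe_add, ← WithTop.coe_zero]
    norm_num
  -- a = c * u
  have hacu : a = c * u := by
    rw [hu, mul_comm a, ← mul_assoc, mul_inv_cancel₀ hc0, one_mul]
  have hderu : 0 ≤ v (der u) := hderO u (le_of_eq hvu.symm)
  have hda : der a = c * der u := by
    rw [hacu, hder_mul, hdc, zero_mul, zero_add]
  calc v a = v c + 0 := by rw [hγ, hvc, add_zero]
    _ ≤ v c + v (der u) := by exact add_le_add_right hderu _
    _ = v (der a) := by rw [hda, hvmul]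
end
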